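/- Let 0 < p < ∞, 0 < q < ∞ and set r = min(p,q). There is a constant C, depending only on p and q, such that for every finite family f_1, ..., f_n ∈ L_{p,q}(0,∞) of disjointly supported functions, ‖Σ_{i=1}^n f_i‖_{p,q} ≤ C (Σ_{i=1}^n ‖f_i‖_{p,q}^r)^{1/r} (upper r-estimate). -/

import Mathlib

open MeasureTheory Filter Set Topology
open scoped ENNReal

noncomputable section

/-- Lebesgue measure on `(0,∞)`. -/
def mIoi : Measure ℝ := volume.restrict (Set.Ioi (0:ℝ))

/-- Decreasing rearrangement of `f` with respect to Lebesgue measure on `(0,∞)`: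
`μ_t(f) = inf { s ≥ 0 : m({ x : |f(x)| > s }) ≤ t }`. -/
def rearr (f : ℝ → ℂ) (t : ℝ) : ℝ :=
  sInf {s : ℝ | 0 ≤ s ∧ mIoi {x | s < ‖f x‖} ≤ ENNReal.ofReal t}

/-- The Lorentz `L_{p,q}(0,∞)` quasi-norm (extended-real valued):
`‖f‖_{p,q} = ((q/p) ∫_0^∞ t^{q/p-1} μ_t(f)^q dt)^{1/q}`. -/
def lorentzNormE (p q : ℝ) (f : ℝ → ℂ) : ℝ≥0∞ :=
  (ENNReal.ofReal (q / p) *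
    ∫⁻ t in Set.Ioi (0:ℝ), ENNReal.ofReal (t ^ (q / p - 1) * rearr f t ^ q)) ^ (1 / q)

/-- Membership in the Lorentz space `L_{p,q}(0,∞)`. -/
def MemLorentz (p q : ℝ) (f : ℝ → ℂ) : Prop :=
  AEMeasurable f mIoi ∧ lorentzNormE p q f < ⊤

/-- The real-valued Lorentz quasi-norm. -/
def lorNorm (p q : ℝ) (f : ℝ → ℂ) : ℝ := (lorentzNormE p q f).toReal

namespace LorentzAux

def dFn (f : ℝ → ℂ) (s : ℝ) : ℝ≥0∞ := mIoi {x | s < ‖f x‖}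

lemma dFn_antitone (f : ℝ → ℂ) : Antitone (dFn f) := by
  intro a b hab
  exact measure_mono (fun x hx => lt_of_le_of_lt hab hx)

lemma rearr_eq_dFn (f : ℝ → ℂ) (t : ℝ) :
    rearr f t = sInf {s : ℝ | 0 ≤ s ∧ dFn f s ≤ ENNReal.ofReal t} := rfl

lemma rearr_nonneg (f : ℝ → ℂ) (t : ℝ) : 0 ≤ rearr f t := by
  apply Real.sInf_nonneg
  intro s hs; exact hs.1

lemma dFn_congr {f g : ℝ → ℂ} (h : f =ᵐ[mIoi] g) : dFn f = dFn g := by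
  funext s
  apply measure_congr
  filter_upwards [h] with x hx
  change (s < ‖f x‖) = (s < ‖g x‖)
  rw [hx]

lemma lorentzNormE_congr (p q : ℝ) {f g : ℝ → ℂ} (h : f =ᵐ[mIoi] g) :
    lorentzNormE p q f = lorentzNormE p q g := by
  have hr : rearr f = rearr g := by
    funext t; rw [rearr_eq_dFn, rearr_eq_dFn, dFn_congr h]
  unfold lorentzNormE
  rw [hr]

lemma dFn_right {g : ℝ → ℂ} (hg : Measurable g) {s : ℝ} {c : ℝ≥0∞} (h : c < dFn g s) :
    ∃ s' > s, c < dFn g s' := by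
  set u : ℕ → Set ℝ := fun n => {x | s + 1/(n+1) < ‖g x‖} with hu
  have hmono : Monotone u := by
    intro n m hnm x hx
    have h1 : (1:ℝ)/(m+1) ≤ 1/(n+1) := by
      apply one_div_le_one_div_of_le
      · positivity
      · have : (n:ℝ) ≤ m := Nat.cast_le.2 hnm
        linarith
    simp only [hu, Set.mem_setOf_eq] at hx ⊢
    linarith
  have hU : (⋃ n, u n) = {x | s < ‖g x‖} := by
    ext x
    simp only [Set.mem_iUnion, Set.mem_setOf_eq, hu]
    constructor
    · rintro ⟨n, hn⟩
      have : (0:ℝ) < 1/(n+1) := by positivity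
      linarith
    · intro hx
      obtain ⟨n, hn⟩ := exists_nat_one_div_lt (sub_pos.2 hx)
      exact ⟨n, by push_cast at hn ⊢; linarith⟩
  have hms : ∀ n, MeasurableSet (u n) := by
    intro n
    exact measurableSet_lt measurable_const hg.norm
  have := hmono.measure_iUnion (μ := mIoi)
  rw [hU] at this
  have hlt : c < ⨆ n, mIoi (u n) := by
    rw [← this]; exact h
  obtain ⟨n, hn⟩ := lt_iSup_iff.1 hlt
  exact ⟨s + 1/(n+1), lt_add_of_pos_right s (by positivity), hn⟩

def Tame (g : ℝ → ℂ) : Prop := ∃ s : ℝ, dFn g s < ⊤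

lemma tame_nonempty {g : ℝ → ℂ} (hg : Measurable g) (ht : Tame g) {t : ℝ} (htpos : 0 < t) :
    ∃ s : ℝ, 0 ≤ s ∧ dFn g s ≤ ENNReal.ofReal t := by
  obtain ⟨s₀, hs₀⟩ := ht
  set s₁ := max s₀ 0 with hs₁
  have hfin : dFn g s₁ < ⊤ := lt_of_le_of_lt (dFn_antitone g (le_max_left _ _)) hs₀
  set C : ℕ → Set ℝ := fun n => {x | s₁ + n < ‖g x‖} with hC
  have hms : ∀ n, NullMeasurableSet (C n) mIoi := by
    intro n
    exact (measurableSet_lt measurable_const hg.norm).nullMeasurableSet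
  have hanti : Antitone C := by
    intro n m hnm x hx
    simp only [hC, Set.mem_setOf_eq] at *
    have : (n:ℝ) ≤ m := Nat.cast_le.2 hnm
    linarith
  have hI : (⋂ n, C n) = ∅ := by
    ext x
    simp only [Set.mem_iInter, Set.mem_setOf_eq, Set.mem_empty_iff_false, iff_false, not_forall,
      not_lt, hC]
    obtain ⟨n, hn⟩ := exists_nat_ge (‖g x‖ - s₁)
    exact ⟨n, by linarith⟩
  have htend : Tendsto (mIoi ∘ C) atTop (𝓝 (mIoi (⋂ n, C n))) := by
    apply tendsto_measure_iInter_atTop hms hanti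
    refine ⟨0, ?_⟩
    have : C 0 = {x | s₁ < ‖g x‖} := by
      simp [hC]
    rw [this]
    exact hfin.ne
  rw [hI, measure_empty] at htend
  have hev := htend.eventually (gt_mem_nhds (show (0:ℝ≥0∞) < ENNReal.ofReal t from ENNReal.ofReal_pos.2 htpos))
  obtain ⟨n, hn⟩ := hev.exists
  exact ⟨s₁ + n, by positivity, le_of_lt hn⟩

lemma rearr_gt_iff {g : ℝ → ℂ} (hg : Measurable g) (ht : Tame g) {s t : ℝ}
    (hs : 0 ≤ s) (htpos : 0 < t) :
    s < rearr g t ↔ ENNReal.ofReal t < dFn g s := by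
  constructor
  · intro hlt
    by_contra hnot
    push_neg at hnot
    have : rearr g t ≤ s :=
      csInf_le ⟨0, fun y hy => hy.1⟩ ⟨hs, hnot⟩
    linarith
  · intro hD
    obtain ⟨s', hs's, hs'D⟩ := dFn_right hg hD
    have hne : {s : ℝ | 0 ≤ s ∧ dFn g s ≤ ENNReal.ofReal t}.Nonempty := by
      obtain ⟨σ, hσ0, hσ⟩ := tame_nonempty hg ht htpos
      exact ⟨σ, hσ0, hσ⟩
    have : s' ≤ rearr g t := by
      apply le_csInf hne
      intro b hb
      by_contra hbs
      push_neg at hbs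
      have : dFn g s' ≤ dFn g b := dFn_antitone g hbs.le
      exact absurd (hb.2) (not_le.2 (lt_of_lt_of_le hs'D this))
    linarith

lemma lorentzNormE_eq_zero_of_wild (p q : ℝ) (hq : 0 < q) {g : ℝ → ℂ}
    (h : ∀ s, 0 < s → dFn g s = ⊤) : lorentzNormE p q g = 0 := by
  have hr : ∀ t : ℝ, rearr g t = 0 := by
    intro t
    rw [rearr_eq_dFn]
    convert Real.sInf_empty
    ext s
    simp only [Set.mem_setOf_eq, Set.mem_empty_iff_false, iff_false, not_and]
    intro hs0
    have h1 : dFn g (s+1) ≤ dFn g s := dFn_antitone g (by linarith)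
    rw [h (s+1) (by linarith)] at h1
    rw [top_le_iff.1 h1]
    exact fun hc => absurd hc (by simp)
  unfold lorentzNormE
  have : ∀ t : ℝ, ENNReal.ofReal (t ^ (q/p - 1) * rearr g t ^ q) = 0 := by
    intro t
    rw [hr t, Real.zero_rpow hq.ne', mul_zero, ENNReal.ofReal_zero]
  simp only [this, lintegral_const, zero_mul, mul_zero]
  exact ENNReal.zero_rpow_of_pos (by positivity)



lemma lintegral_rpow_Ioo {r : ℝ} (hr : 0 < r) {c : ℝ} (hc : 0 ≤ c) :
    ∫⁻ s in Set.Ioo (0:ℝ) c, ENNReal.ofReal (s ^ (r-1)) = ENNReal.ofReal (c ^ r / r) := by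
  have hint : IntegrableOn (fun s : ℝ => s ^ (r-1)) (Set.Ioo 0 c) volume := by
    have h1 : IntervalIntegrable (fun s : ℝ => s ^ (r-1)) volume 0 c :=
      intervalIntegral.intervalIntegrable_rpow' (by linarith)
    have := (intervalIntegrable_iff_integrableOn_Ioc_of_le hc).1 h1
    exact this.mono_set Set.Ioo_subset_Ioc_self
  have hval : ∫ s in Set.Ioo (0:ℝ) c, s ^ (r-1) = c ^ r / r := by
    rw [← MeasureTheory.integral_Ioc_eq_integral_Ioo]
    have h2 : ∫ s in Set.Ioc (0:ℝ) c, s ^ (r-1) = ∫ x in (0:ℝ)..c, x ^ (r-1) :=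
      (intervalIntegral.integral_of_le hc).symm
    rw [h2, integral_rpow (Or.inl (by linarith))]
    rw [show r - 1 + 1 = r by ring, Real.zero_rpow hr.ne', sub_zero]
  rw [← ofReal_integral_eq_lintegral_ofReal hint]
  · rw [hval]
  · filter_upwards [self_mem_ae_restrict measurableSet_Ioo] with s hs
    exact Real.rpow_nonneg hs.1.le _

lemma lintegral_rpow_indicator {r : ℝ} (hr : 0 < r) {c : ℝ} (hc : 0 ≤ c) :
    ∫⁻ s in Set.Ioi (0:ℝ), ENNReal.ofReal (s ^ (r-1)) * (Set.Iio c).indicator 1 s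
      = ENNReal.ofReal (c ^ r / r) := by
  have h1 : ∀ s : ℝ, ENNReal.ofReal (s ^ (r-1)) * (Set.Iio c).indicator 1 s
      = (Set.Iio c).indicator (fun s => ENNReal.ofReal (s ^ (r-1))) s := by
    intro s
    by_cases h : s ∈ Set.Iio c <;> simp [h]
  simp_rw [h1]
  rw [lintegral_indicator measurableSet_Iio, Measure.restrict_restrict measurableSet_Iio,
    Set.Iio_inter_Ioi]
  exact lintegral_rpow_Ioo hr hc

lemma lintegral_rpow_Ioi_top {r : ℝ} (hr : 0 < r) :
    ∫⁻ s in Set.Ioi (0:ℝ), ENNReal.ofReal (s ^ (r-1)) = ⊤ := by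
  apply ENNReal.eq_top_of_forall_nnreal_le
  intro M
  set c : ℝ := (((M:ℝ) + 1) * r) ^ (1/r) with hcdef
  have hc : 0 ≤ c := Real.rpow_nonneg (by positivity) _
  have hcr : c ^ r = ((M:ℝ) + 1) * r := by
    rw [hcdef, one_div, Real.rpow_inv_rpow (by positivity) hr.ne']
  have key : ENNReal.ofReal (c ^ r / r) ≤ ∫⁻ s in Set.Ioi (0:ℝ), ENNReal.ofReal (s ^ (r-1)) := by
    rw [← lintegral_rpow_Ioo hr hc]
    exact lintegral_mono_set (fun x hx => hx.1)
  refine le_trans ?_ key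
  rw [hcr, mul_div_assoc, div_self hr.ne', mul_one]
  have h3 : ((M:ℝ≥0∞)) = ENNReal.ofReal (M:ℝ) := (ENNReal.ofReal_coe_nnreal).symm
  rw [h3]
  exact ENNReal.ofReal_le_ofReal (by linarith)


def Y (p q : ℝ) (g : ℝ → ℂ) : ℝ≥0∞ :=
  ∫⁻ s in Set.Ioi (0:ℝ), ENNReal.ofReal (s ^ (q-1)) * (dFn g s) ^ (q / p)

lemma layer_cake (p q : ℝ) (hp : 0 < p) (hq : 0 < q) {g : ℝ → ℂ}
    (hg : Measurable g) (ht : Tame g) :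
    lorentzNormE p q g = (ENNReal.ofReal q * Y p q g) ^ (1 / q) := by
  have hαpos : 0 < q / p := div_pos hq hp
  set α := q / p with hα
  set S : Set (ℝ × ℝ) := {x : ℝ × ℝ | ENNReal.ofReal x.1 < dFn g x.2} with hS
  set F : ℝ → ℝ → ℝ≥0∞ := fun t s =>
    ENNReal.ofReal (t ^ (α - 1)) * (ENNReal.ofReal (s ^ (q - 1)) *
      S.indicator 1 (t, s)) with hF
  have hmS : MeasurableSet S := by
    apply measurableSet_lt
    · exact ENNReal.measurable_ofReal.comp measurable_fst
    · exact ((dFn_antitone g).measurable).comp measurable_snd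
  -- step 1
  have step1 : ∀ t ∈ Set.Ioi (0:ℝ),
      ENNReal.ofReal (t ^ (α - 1) * rearr g t ^ q)
        = ENNReal.ofReal q * ∫⁻ s in Set.Ioi (0:ℝ), F t s := by
    intro t htpos
    rw [Set.mem_Ioi] at htpos
    have hc : 0 ≤ rearr g t := rearr_nonneg g t
    have hinner : ∫⁻ s in Set.Ioi (0:ℝ), F t s
        = ENNReal.ofReal (t ^ (α - 1)) * ENNReal.ofReal (rearr g t ^ q / q) := by
      rw [hF]
      rw [lintegral_const_mul' _ _ ENNReal.ofReal_ne_top]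
      congr 1
      rw [← lintegral_rpow_indicator hq hc]
      apply setLIntegral_congr_fun measurableSet_Ioi
      intro s hs
      dsimp only
      congr 1
      have hiff : (t, s) ∈ S ↔ s ∈ Set.Iio (rearr g t) := by
        rw [hS, Set.mem_setOf_eq, Set.mem_Iio]
        exact ((rearr_gt_iff hg ht (le_of_lt hs) htpos)).symm
      simp only [Set.indicator_apply, Pi.one_apply]
      exact if_congr hiff rfl rfl
    rw [hinner, ← mul_assoc, mul_comm (ENNReal.ofReal q), mul_assoc,
      ← ENNReal.ofReal_mul (by positivity), ← ENNReal.ofReal_mul (Real.rpow_nonneg (le_of_lt htpos) _)]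
    congr 2
    field_simp
  -- step 4 : inner t integral for fixed s > 0
  have step4 : ∀ s ∈ Set.Ioi (0:ℝ),
      ∫⁻ t in Set.Ioi (0:ℝ), F t s
        = ENNReal.ofReal (s ^ (q - 1)) * ((dFn g s) ^ α * ENNReal.ofReal (p / q)) := by
    intro s hs
    rw [Set.mem_Ioi] at hs
    have hcomm : ∀ t : ℝ, F t s = ENNReal.ofReal (s ^ (q - 1)) *
        (ENNReal.ofReal (t ^ (α - 1)) * S.indicator 1 (t, s)) := by
      intro t; rw [hF]; ring
    simp_rw [hcomm]
    rw [lintegral_const_mul' _ _ ENNReal.ofReal_ne_top]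
    congr 1
    by_cases hDs : dFn g s = ⊤
    · have hind : ∀ t : ℝ, S.indicator (1 : ℝ × ℝ → ℝ≥0∞) (t, s) = 1 := by
        intro t
        apply Set.indicator_of_mem
        rw [hS, Set.mem_setOf_eq, hDs]
        exact ENNReal.ofReal_lt_top
      simp_rw [hind, mul_one]
      rw [lintegral_rpow_Ioi_top hαpos, hDs]
      rw [ENNReal.top_rpow_of_pos hαpos, ENNReal.top_mul (by simp [ENNReal.ofReal_pos, div_pos hp hq] : ENNReal.ofReal (p/q) ≠ 0)]
    · set d := (dFn g s).toReal with hd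
      have hd0 : 0 ≤ d := ENNReal.toReal_nonneg
      have key : ∫⁻ t in Set.Ioi (0:ℝ), ENNReal.ofReal (t ^ (α - 1)) * S.indicator 1 (t, s)
          = ENNReal.ofReal (d ^ α / α) := by
        rw [← lintegral_rpow_indicator hαpos hd0]
        apply setLIntegral_congr_fun measurableSet_Ioi
        intro t htpos
        dsimp only
        congr 1
        have hiff : (t, s) ∈ S ↔ t ∈ Set.Iio d := by
          rw [hS, Set.mem_setOf_eq, Set.mem_Iio, hd]
          exact ENNReal.ofReal_lt_iff_lt_toReal (le_of_lt (Set.mem_Ioi.1 htpos)) hDs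
        simp only [Set.indicator_apply, Pi.one_apply]
        exact if_congr hiff rfl rfl
      have hds : dFn g s = ENNReal.ofReal d := by
        rw [hd, ENNReal.ofReal_toReal hDs]
      rw [key, hds, ENNReal.ofReal_rpow_of_nonneg hd0 hαpos.le,
        ← ENNReal.ofReal_mul (Real.rpow_nonneg hd0 _)]
      congr 1
      rw [div_eq_mul_inv, hα, inv_div]
  -- measurability for Tonelli
  have hFmeas : AEMeasurable (Function.uncurry F)
      ((volume.restrict (Set.Ioi (0:ℝ))).prod (volume.restrict (Set.Ioi (0:ℝ)))) := by
    apply Measurable.aemeasurable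
    have : Function.uncurry F = fun x : ℝ × ℝ =>
        ENNReal.ofReal (x.1 ^ (α - 1)) * (ENNReal.ofReal (x.2 ^ (q - 1)) *
          S.indicator 1 x) := rfl
    rw [this]
    apply Measurable.mul
    · exact ENNReal.measurable_ofReal.comp (by measurability)
    · apply Measurable.mul
      · exact ENNReal.measurable_ofReal.comp (by measurability)
      · exact measurable_one.indicator hmS
  -- assemble
  unfold lorentzNormE
  rw [show (q / p) = α from hα.symm]
  congr 1
  rw [setLIntegral_congr_fun measurableSet_Ioi step1]
  rw [lintegral_const_mul' _ _ ENNReal.ofReal_ne_top]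
  rw [lintegral_lintegral_swap hFmeas]
  rw [setLIntegral_congr_fun measurableSet_Ioi step4]
  have hpull : ∫⁻ s in Set.Ioi (0:ℝ), ENNReal.ofReal (s ^ (q - 1)) * ((dFn g s) ^ α * ENNReal.ofReal (p / q))
      = ENNReal.ofReal (p / q) * Y p q g := by
    rw [Y, ← lintegral_const_mul' _ _ ENNReal.ofReal_ne_top]
    congr 1
    funext s
    ring
  rw [hpull]
  rw [← mul_assoc, ← mul_assoc, mul_comm (ENNReal.ofReal α) (ENNReal.ofReal q), mul_assoc (ENNReal.ofReal q), ← ENNReal.ofReal_mul hαpos.le]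
  rw [show α * (p / q) = 1 by rw [hα]; field_simp, ENNReal.ofReal_one, mul_one, Y]



lemma rpow_sum_le_sum_rpow {n : ℕ} (a : Fin n → ℝ≥0∞) {e : ℝ} (he : 0 < e) (he1 : e ≤ 1) :
    (∑ i, a i) ^ e ≤ ∑ i, (a i) ^ e := by
  induction n with
  | zero => simp [ENNReal.zero_rpow_of_pos he]
  | succ m ih =>
    rw [Fin.sum_univ_succ, Fin.sum_univ_succ]
    calc (a 0 + ∑ i : Fin m, a i.succ) ^ e
        ≤ (a 0) ^ e + (∑ i : Fin m, a i.succ) ^ e :=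
          ENNReal.rpow_add_le_add_rpow _ _ he.le he1
      _ ≤ (a 0) ^ e + ∑ i : Fin m, (a i.succ) ^ e := by
          exact add_le_add le_rfl (ih (fun i => a i.succ))

lemma minkowski_finset {α : Type*} [MeasurableSpace α] (μ : Measure α) {n : ℕ}
    (h : Fin n → α → ℝ≥0∞) (hm : ∀ i, AEMeasurable (h i) μ) {e : ℝ} (he : 1 ≤ e) :
    (∫⁻ x, (∑ i, h i x) ^ e ∂μ) ^ (1/e) ≤ ∑ i, (∫⁻ x, (h i x) ^ e ∂μ) ^ (1/e) := by
  induction n with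
  | zero =>
    simp only [Finset.univ_eq_empty, Finset.sum_empty]
    rw [ENNReal.zero_rpow_of_pos (by linarith), lintegral_const 0, zero_mul,
      ENNReal.zero_rpow_of_pos (by positivity)]
  | succ m ih =>
    simp_rw [Fin.sum_univ_succ]
    calc (∫⁻ x, (h 0 x + ∑ i : Fin m, h i.succ x) ^ e ∂μ) ^ (1/e)
        ≤ (∫⁻ x, (h 0 x) ^ e ∂μ) ^ (1/e) +
            (∫⁻ x, (∑ i : Fin m, h i.succ x) ^ e ∂μ) ^ (1/e) :=
          ENNReal.lintegral_Lp_add_le (hm 0)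
            (Finset.aemeasurable_fun_sum _ (fun i _ => hm i.succ)) he
      _ ≤ _ := add_le_add le_rfl (ih (fun i => h i.succ) (fun i => hm i.succ))


lemma dFn_sum {n : ℕ} (g : Fin n → ℝ → ℂ) (hg : ∀ i, Measurable (g i))
    (hdisj : ∀ᵐ x ∂mIoi, ∀ i j, i ≠ j → g i x * g j x = 0) {s : ℝ} (hs : 0 < s) :
    dFn (fun x => ∑ i, g i x) s = ∑ i, dFn (g i) s := by
  have hA : MeasurableSet {x : ℝ | s < ‖∑ i, g i x‖} :=
    measurableSet_lt measurable_const (Finset.measurable_sum Finset.univ (fun i _ => hg i)).norm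
  have hAi : ∀ i, MeasurableSet {x : ℝ | s < ‖g i x‖} :=
    fun i => measurableSet_lt measurable_const (hg i).norm
  have key : ∀ᵐ x ∂mIoi, {x : ℝ | s < ‖∑ i, g i x‖}.indicator (1 : ℝ → ℝ≥0∞) x
      = ∑ i, {x : ℝ | s < ‖g i x‖}.indicator (1 : ℝ → ℝ≥0∞) x := by
    filter_upwards [hdisj] with x hx
    by_cases hex : ∃ i, g i x ≠ 0
    · obtain ⟨i0, hi0⟩ := hex
      have hz : ∀ j, j ≠ i0 → g j x = 0 := by
        intro j hj
        rcases mul_eq_zero.1 (hx i0 j (fun hc => hj hc.symm)) with h | h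
        · exact absurd h hi0
        · exact h
      have hsum : ∑ i, g i x = g i0 x :=
        Finset.sum_eq_single_of_mem i0 (Finset.mem_univ _) (fun j _ hj => hz j hj)
      have hterm : ∀ j, j ≠ i0 → {x : ℝ | s < ‖g j x‖}.indicator (1 : ℝ → ℝ≥0∞) x = 0 := by
        intro j hj
        apply Set.indicator_of_notMem
        simp only [Set.mem_setOf_eq, hz j hj, norm_zero]
        exact not_lt.2 hs.le
      rw [Finset.sum_eq_single_of_mem i0 (Finset.mem_univ _) (fun j _ hj => hterm j hj)]
      simp only [Set.indicator_apply, Set.mem_setOf_eq, hsum]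
    · push_neg at hex
      have hsum : ∑ i, g i x = 0 := Finset.sum_eq_zero (fun i _ => hex i)
      have hterm : ∀ j : Fin n, {x : ℝ | s < ‖g j x‖}.indicator (1 : ℝ → ℝ≥0∞) x = 0 := by
        intro j
        apply Set.indicator_of_notMem
        simp only [Set.mem_setOf_eq, hex j, norm_zero]
        exact not_lt.2 hs.le
      rw [Finset.sum_eq_zero (fun j _ => hterm j)]
      apply Set.indicator_of_notMem
      simp only [Set.mem_setOf_eq, hsum, norm_zero]
      exact not_lt.2 hs.le
  calc dFn (fun x => ∑ i, g i x) s
      = ∫⁻ x, {x : ℝ | s < ‖∑ i, g i x‖}.indicator (1 : ℝ → ℝ≥0∞) x ∂mIoi :=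
        (lintegral_indicator_one hA).symm
    _ = ∫⁻ x, ∑ i, {x : ℝ | s < ‖g i x‖}.indicator (1 : ℝ → ℝ≥0∞) x ∂mIoi :=
        lintegral_congr_ae key
    _ = ∑ i, ∫⁻ x, {x : ℝ | s < ‖g i x‖}.indicator (1 : ℝ → ℝ≥0∞) x ∂mIoi :=
        lintegral_finset_sum _ (fun i _ => measurable_one.indicator (hAi i))
    _ = ∑ i, dFn (g i) s :=
        Finset.sum_congr rfl (fun i _ => lintegral_indicator_one (hAi i))

end LorentzAux

open LorentzAux

/-- For `0 < p, q < ∞` and `r = min(p,q)`, `L_{p,q}(0,∞)` satisfies an upper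
`r`-estimate (with a constant depending only on `p` and `q`) on disjointly supported
functions. -/
theorem lorentz_upper_r_estimate (p q : ℝ) (hp : 0 < p) (hq : 0 < q) :
    ∃ C : ℝ, 0 < C ∧ ∀ (n : ℕ) (f : Fin n → ℝ → ℂ),
      (∀ i, MemLorentz p q (f i)) →
      (∀ i j, i ≠ j → (fun x => f i x * f j x) =ᵐ[mIoi] 0) →
      lorentzNormE p q (fun x => ∑ i, f i x) ≤
        ENNReal.ofReal C * (∑ i, lorentzNormE p q (f i) ^ (min p q)) ^ (1 / min p q) := by
  refine ⟨1, one_pos, ?_⟩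
  intro n f hmem hdisj
  rw [ENNReal.ofReal_one, one_mul]
  have hg0 : ∀ i, AEMeasurable (f i) mIoi := fun i => (hmem i).1
  set g : Fin n → ℝ → ℂ := fun i => AEMeasurable.mk (f i) (hg0 i) with hgdef
  have hgm : ∀ i, Measurable (g i) := fun i => (hg0 i).measurable_mk
  have hge : ∀ i, f i =ᵐ[mIoi] g i := fun i => (hg0 i).ae_eq_mk
  have hall : ∀ᵐ x ∂mIoi, ∀ i, f i x = g i x := ae_all_iff.2 hge
  have hsum_ae : (fun x => ∑ i, f i x) =ᵐ[mIoi] (fun x => ∑ i, g i x) := by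
    filter_upwards [hall] with x hx
    exact Finset.sum_congr rfl fun i _ => hx i
  have hdisjf : ∀ᵐ x ∂mIoi, ∀ i j, i ≠ j → f i x * f j x = 0 := by
    rw [ae_all_iff]
    intro i
    rw [ae_all_iff]
    intro j
    by_cases hij : i = j
    · exact Filter.Eventually.of_forall (fun x h => absurd hij h)
    · filter_upwards [hdisj i j hij] with x hx
      exact fun _ => hx
  have hdisjg : ∀ᵐ x ∂mIoi, ∀ i j, i ≠ j → g i x * g j x = 0 := by
    filter_upwards [hall, hdisjf] with x hx hd
    intro i j hij
    rw [← hx i, ← hx j]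
    exact hd i j hij
  rw [lorentzNormE_congr p q hsum_ae]
  have hRHS : ∑ i, lorentzNormE p q (f i) ^ min p q = ∑ i, lorentzNormE p q (g i) ^ min p q :=
    Finset.sum_congr rfl fun i _ => by rw [lorentzNormE_congr p q (hge i)]
  rw [hRHS]
  by_cases hwild : ∃ i, ∀ s : ℝ, 0 < s → dFn (g i) s = ⊤
  · obtain ⟨i0, hi0⟩ := hwild
    have hsw : ∀ s : ℝ, 0 < s → dFn (fun x => ∑ i, g i x) s = ⊤ := by
      intro s hs
      rw [dFn_sum g hgm hdisjg hs]
      exact ENNReal.sum_eq_top.2 ⟨i0, Finset.mem_univ _, hi0 s hs⟩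
    rw [lorentzNormE_eq_zero_of_wild p q hq hsw]
    exact zero_le
  push_neg at hwild
  have htame : ∀ i, Tame (g i) := by
    intro i
    obtain ⟨s, _, hne⟩ := hwild i
    exact ⟨s, lt_top_iff_ne_top.2 hne⟩
  have hsmeas : Measurable (fun x => ∑ i, g i x) :=
    Finset.measurable_sum _ (fun i _ => hgm i)
  have htsum : Tame (fun x => ∑ i, g i x) := by
    choose sv hsv using htame
    have hSpos : (0:ℝ) < 1 + ∑ i, |sv i| := by positivity
    refine ⟨1 + ∑ i, |sv i|, ?_⟩
    rw [dFn_sum g hgm hdisjg hSpos, ENNReal.sum_lt_top]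
    intro i _
    have h1 : |sv i| ≤ ∑ j, |sv j| :=
      Finset.single_le_sum (f := fun j => |sv j|) (fun j _ => abs_nonneg _) (Finset.mem_univ i)
    have h2 := le_abs_self (sv i)
    exact lt_of_le_of_lt (dFn_antitone _ (by linarith)) (hsv i)
  rw [layer_cake p q hp hq hsmeas htsum]
  have hlcg : ∀ i, lorentzNormE p q (g i) = (ENNReal.ofReal q * Y p q (g i)) ^ (1/q) :=
    fun i => layer_cake p q hp hq (hgm i) (htame i)
  have hαpos : 0 < q / p := div_pos hq hp
  have hYsum : Y p q (fun x => ∑ i, g i x)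
      = ∫⁻ s in Set.Ioi (0:ℝ), ENNReal.ofReal (s ^ (q-1)) * (∑ i, dFn (g i) s) ^ (q/p) := by
    rw [Y]
    apply setLIntegral_congr_fun measurableSet_Ioi
    intro s hs
    dsimp only
    rw [dFn_sum g hgm hdisjg (Set.mem_Ioi.1 hs)]
  have hxq : ∀ x : ℝ≥0∞, (x ^ (1/q)) ^ q = x := by
    intro x
    rw [← ENNReal.rpow_mul, one_div, inv_mul_cancel₀ hq.ne', ENNReal.rpow_one]
  have hDi_meas : ∀ i, Measurable fun s : ℝ =>
      ENNReal.ofReal (s ^ (q-1)) * (dFn (g i) s) ^ (q/p) := by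
    intro i
    apply Measurable.mul
    · exact ENNReal.measurable_ofReal.comp (by measurability)
    · exact ENNReal.continuous_rpow_const.measurable.comp (dFn_antitone (g i)).measurable
  rcases le_total q p with hqp | hpq
  · -- r = q
    rw [min_eq_right hqp]
    have hstep : Y p q (fun x => ∑ i, g i x) ≤ ∑ i, Y p q (g i) := by
      rw [hYsum]
      calc ∫⁻ s in Set.Ioi (0:ℝ), ENNReal.ofReal (s ^ (q-1)) * (∑ i, dFn (g i) s) ^ (q/p)
          ≤ ∫⁻ s in Set.Ioi (0:ℝ), ∑ i, ENNReal.ofReal (s ^ (q-1)) * (dFn (g i) s) ^ (q/p) := by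
            apply lintegral_mono
            intro s
            dsimp only
            rw [← Finset.mul_sum]
            exact mul_le_mul_right
              (rpow_sum_le_sum_rpow _ hαpos (div_le_one_of_le₀ hqp hp.le)) _
        _ = ∑ i, Y p q (g i) :=
            lintegral_finset_sum _ (fun i _ => hDi_meas i)
    calc (ENNReal.ofReal q * Y p q (fun x => ∑ i, g i x)) ^ (1/q)
        ≤ (ENNReal.ofReal q * ∑ i, Y p q (g i)) ^ (1/q) :=
          ENNReal.rpow_le_rpow (mul_le_mul_right hstep _) (by positivity)
      _ = (∑ i, ENNReal.ofReal q * Y p q (g i)) ^ (1/q) := by rw [Finset.mul_sum]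
      _ = (∑ i, lorentzNormE p q (g i) ^ q) ^ (1/q) := by
          congr 1
          refine Finset.sum_congr rfl fun i _ => ?_
          rw [hlcg i, hxq]
  · -- r = p
    rw [min_eq_left hpq]
    have hα1 : 1 ≤ q / p := (one_le_div hp).2 hpq
    set h : Fin n → ℝ → ℝ≥0∞ :=
      fun i s => ENNReal.ofReal (s ^ ((q-1)/(q/p))) * dFn (g i) s with hh
    have hhm : ∀ i, AEMeasurable (h i) (volume.restrict (Set.Ioi (0:ℝ))) := by
      intro i
      apply Measurable.aemeasurable
      apply Measurable.mul
      · exact ENNReal.measurable_ofReal.comp (by measurability)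
      · exact (dFn_antitone (g i)).measurable
    have hkey : ∀ s : ℝ, 0 < s → ∀ D : ℝ≥0∞,
        ENNReal.ofReal (s ^ (q-1)) * D ^ (q/p)
          = (ENNReal.ofReal (s ^ ((q-1)/(q/p))) * D) ^ (q/p) := by
      intro s hs D
      rw [ENNReal.mul_rpow_of_nonneg _ _ hαpos.le,
        ENNReal.ofReal_rpow_of_nonneg (Real.rpow_nonneg hs.le _) hαpos.le,
        ← Real.rpow_mul hs.le, div_mul_cancel₀ _ hαpos.ne']
    have hYsum' : Y p q (fun x => ∑ i, g i x)
        = ∫⁻ s in Set.Ioi (0:ℝ), (∑ i, h i s) ^ (q/p) := by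
      rw [hYsum]
      apply setLIntegral_congr_fun measurableSet_Ioi
      intro s hs
      dsimp only
      rw [hkey s (Set.mem_Ioi.1 hs)]
      congr 1
      simp only [hh, Finset.mul_sum]
    have hYi : ∀ i, Y p q (g i) = ∫⁻ s in Set.Ioi (0:ℝ), (h i s) ^ (q/p) := by
      intro i
      rw [Y]
      apply setLIntegral_congr_fun measurableSet_Ioi
      intro s hs
      dsimp only
      rw [hkey s (Set.mem_Ioi.1 hs)]
    have hmink := minkowski_finset (volume.restrict (Set.Ioi (0:ℝ))) h hhm hα1
    have hYle : (Y p q (fun x => ∑ i, g i x)) ^ (1/(q/p))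
        ≤ ∑ i, (Y p q (g i)) ^ (1/(q/p)) := by
      rw [hYsum']
      refine le_trans hmink (le_of_eq (Finset.sum_congr rfl fun i _ => ?_))
      rw [hYi i]
    have hq1 : (Y p q (fun x => ∑ i, g i x)) ^ (1/q)
        ≤ (∑ i, (Y p q (g i)) ^ (1/(q/p))) ^ (1/p) := by
      have h2 : (Y p q (fun x => ∑ i, g i x)) ^ (1/q)
          = ((Y p q (fun x => ∑ i, g i x)) ^ (1/(q/p))) ^ (1/p) := by
        rw [← ENNReal.rpow_mul]
        congr 1
        field_simp
      rw [h2]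
      exact ENNReal.rpow_le_rpow hYle (by positivity)
    have hai : ∀ i, lorentzNormE p q (g i) ^ p
        = (ENNReal.ofReal q) ^ (1/(q/p)) * (Y p q (g i)) ^ (1/(q/p)) := by
      intro i
      rw [hlcg i, ← ENNReal.rpow_mul,
        show (1/q)*p = 1/(q/p) from by field_simp,
        ENNReal.mul_rpow_of_nonneg _ _ (one_div_nonneg.2 hαpos.le)]
    calc (ENNReal.ofReal q * Y p q (fun x => ∑ i, g i x)) ^ (1/q)
        = (ENNReal.ofReal q) ^ (1/q) * (Y p q (fun x => ∑ i, g i x)) ^ (1/q) :=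
          ENNReal.mul_rpow_of_nonneg _ _ (by positivity)
      _ ≤ (ENNReal.ofReal q) ^ (1/q) * (∑ i, (Y p q (g i)) ^ (1/(q/p))) ^ (1/p) :=
          mul_le_mul_right hq1 _
      _ = (∑ i, lorentzNormE p q (g i) ^ p) ^ (1/p) := by
          rw [Finset.sum_congr rfl (fun i _ => hai i), ← Finset.mul_sum,
            ENNReal.mul_rpow_of_nonneg _ _ (by positivity), ← ENNReal.rpow_mul,
            show (1/(q/p))*(1/p) = 1/q from by field_simp [mul_comm]]
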